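/- arXiv:2306.09602 — 6 statements merged into one kernel-verified Lean document; each statement's English description precedes it below -/
import Mathlib

section
/- Let R be a commutative Noetherian ring, σ a finite type, m a monomial order on σ →₀ ℕ, and I an ideal of MvPolynomial σ R. Then for every head monomial (c,t) ∈ HD(I) there exists a monomial (d,t') ∈ MinMon(HD(I)) with (d,t') dividing (c,t), i.e., d ∣ c in R and t' ≤ t in σ →₀ ℕ. -/
open MvPolynomial

/-- Head term of a polynomial with respect to a monomial order. -/
noncomputable def MonomialOrder.degree' {σ R : Type*} [CommSemiring R] (m : MonomialOrder σ)
    (p : MvPolynomial σ R) : σ →₀ ℕ :=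
  m.toSyn.symm (p.support.sup fun s => m.toSyn s)

/-- Head coefficient of a polynomial with respect to a monomial order. -/
noncomputable def MonomialOrder.leadCoeff' {σ R : Type*} [CommSemiring R] (m : MonomialOrder σ)
    (p : MvPolynomial σ R) : R :=
  p.coeff (m.degree' p)

/-- The set of head monomials of an ideal, as pairs (coefficient, term). -/
def HD {σ R : Type*} [CommRing R] (m : MonomialOrder σ) (I : Ideal (MvPolynomial σ R)) :
    Set (R × (σ →₀ ℕ)) :=
  {ct | ∃ p ∈ I, p ≠ 0 ∧ m.degree' p = ct.2 ∧ m.leadCoeff' p = ct.1}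

/-- Divisibility of monomials, represented as pairs (coefficient, term). -/
def MonDvd {σ R : Type*} [CommRing R] (a b : R × (σ →₀ ℕ)) : Prop :=
  a.1 ∣ b.1 ∧ a.2 ≤ b.2

/-- The divisibility-minimal monomials of a set of monomials: those not strictly divided
by any monomial of the set. -/
def MinMon {σ R : Type*} [CommRing R] (S : Set (R × (σ →₀ ℕ))) : Set (R × (σ →₀ ℕ)) :=
  {a ∈ S | ¬ ∃ b ∈ S, MonDvd b a ∧ ¬ MonDvd a b}

/-- Every head monomial of an ideal is divisible by a minimal head monomial. -/
theorem exists_minMon_dvd {σ R : Type*} [CommRing R] [IsNoetherianRing R] [Finite σ]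
    (m : MonomialOrder σ) (I : Ideal (MvPolynomial σ R)) :
    ∀ c : R, ∀ t : σ →₀ ℕ, (c, t) ∈ HD m I →
      ∃ d : R, ∃ t' : σ →₀ ℕ, (d, t') ∈ MinMon (HD m I) ∧ d ∣ c ∧ t' ≤ t := by
  intro c t hct
  set r : R × (σ →₀ ℕ) → R × (σ →₀ ℕ) → Prop := fun a b => MonDvd a b ∧ ¬ MonDvd b a with hr
  have hwf : WellFounded r := by
    have h1 : WellFounded ((· < ·) : (Ideal R)ᵒᵈ → (Ideal R)ᵒᵈ → Prop) :=
      wellFounded_lt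
    have h2 : WellFounded ((· < ·) : (σ →₀ ℕ) → (σ →₀ ℕ) → Prop) := wellFounded_lt
    have hlex := WellFounded.prod_lex h1 h2
    apply Subrelation.wf ?_ (InvImage.wf
      (fun a : R × (σ →₀ ℕ) =>
        ((OrderDual.toDual (Ideal.span {a.1}), a.2) : (Ideal R)ᵒᵈ × (σ →₀ ℕ))) hlex)
    rintro a b ⟨⟨hd, hle⟩, hn⟩
    by_cases hb : b.1 ∣ a.1
    · have hspan : (OrderDual.toDual (Ideal.span {a.1}) : (Ideal R)ᵒᵈ)
          = OrderDual.toDual (Ideal.span {b.1}) := by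
        simp only [OrderDual.toDual_inj]
        exact le_antisymm (Ideal.span_singleton_le_span_singleton.mpr hb)
          (Ideal.span_singleton_le_span_singleton.mpr hd)
      have hlt : a.2 < b.2 := lt_of_le_not_ge hle (fun h2 => hn ⟨hb, h2⟩)
      show Prod.Lex _ _ (OrderDual.toDual (Ideal.span {a.1}), a.2) (OrderDual.toDual (Ideal.span {b.1}), b.2)
      rw [hspan]
      exact Prod.Lex.right _ hlt
    · have hlt : (OrderDual.toDual (Ideal.span {a.1}) : (Ideal R)ᵒᵈ)
          < OrderDual.toDual (Ideal.span {b.1}) := by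
        apply lt_of_le_not_ge
        · exact Ideal.span_singleton_le_span_singleton.mpr hd
        · exact fun h => hb (Ideal.span_singleton_le_span_singleton.mp h)
      exact Prod.Lex.left _ _ hlt
  obtain ⟨a, ⟨haS, had⟩, hmin⟩ := hwf.has_min
    {x | x ∈ HD m I ∧ MonDvd x (c, t)} ⟨(c, t), hct, dvd_refl c, le_refl t⟩
  refine ⟨a.1, a.2, ⟨haS, ?_⟩, had.1, had.2⟩
  rintro ⟨b, hbS, hbd, hnd⟩
  exact hmin b ⟨hbS, hbd.1.trans had.1, hbd.2.trans had.2⟩ ⟨hbd, hnd⟩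
end

section
/- Let R be a commutative Noetherian ring, σ a finite type, m a monomial order on σ →₀ ℕ, and I an ideal of MvPolynomial σ R. Then I has a finite Gröbner basis: there exists a finite set G of nonzero polynomials with G ⊆ I such that the ideal of MvPolynomial σ R generated by the head monomials {monomial (m.degree g) (m.leadCoeff g) | g ∈ G} equals the ideal generated by all head monomials {monomial (m.degree p) (m.leadCoeff p) | p ∈ I, p ≠ 0}. -/
open MvPolynomial

/-- In any module, if the span of a set is finitely generated, then some finite
subset spans the same submodule. -/
theorem exists_finset_span_eq {R M : Type*} [Semiring R] [AddCommMonoid M] [Module R M]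
    {S : Set M} (h : (Submodule.span R S).FG) :
    ∃ T : Finset M, ↑T ⊆ S ∧ Submodule.span R (T : Set M) = Submodule.span R S := by
  classical
  obtain ⟨T', hT'⟩ := h
  have hx : ∀ x : T', (x : M) ∈ Submodule.span R S :=
    fun x => hT' ▸ Submodule.subset_span x.2
  choose f hf1 hf2 using fun x : T' => Submodule.mem_span_finite_of_mem_span (hx x)
  refine ⟨T'.attach.biUnion f, ?_, le_antisymm ?_ ?_⟩
  · intro q hq
    simp only [Finset.coe_biUnion, Set.mem_iUnion, Finset.mem_coe, Finset.mem_attach,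
      exists_true_left] at hq
    obtain ⟨x, hxq⟩ := hq
    exact hf1 x hxq
  · refine Submodule.span_le.2 ?_
    intro q hq
    simp only [Finset.coe_biUnion, Set.mem_iUnion, Finset.mem_coe, Finset.mem_attach,
      exists_true_left] at hq
    obtain ⟨x, hxq⟩ := hq
    exact Submodule.subset_span (hf1 x hxq)
  · rw [← hT']
    refine Submodule.span_le.2 fun x hxT => ?_
    have := hf2 ⟨x, hxT⟩
    refine Submodule.span_mono ?_ this
    intro q hq
    exact Finset.mem_coe.2 (Finset.mem_biUnion.2 ⟨⟨x, hxT⟩, Finset.mem_attach _ _, hq⟩)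

/-- Every ideal over a Noetherian coefficient ring has a finite Gröbner basis. -/
theorem exists_groebner_basis {σ R : Type*} [CommRing R] [IsNoetherianRing R] [Finite σ]
    (m : MonomialOrder σ) (I : Ideal (MvPolynomial σ R)) :
    ∃ G : Finset (MvPolynomial σ R), (∀ g ∈ G, g ≠ 0) ∧ (G : Set (MvPolynomial σ R)) ⊆ I ∧
      Ideal.span {q : MvPolynomial σ R | ∃ g ∈ G, q = monomial (m.degree' g) (m.leadCoeff' g)} =
        Ideal.span {q : MvPolynomial σ R |
          ∃ p ∈ I, p ≠ 0 ∧ q = monomial (m.degree' p) (m.leadCoeff' p)} := by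
  classical
  set S : Set (MvPolynomial σ R) :=
    {q | ∃ p ∈ I, p ≠ 0 ∧ q = monomial (m.degree' p) (m.leadCoeff' p)} with hS
  have hfg : (Ideal.span S).FG := (isNoetherian_def.mp inferInstance) _
  obtain ⟨T, hTS, hTspan⟩ := exists_finset_span_eq hfg
  choose g hgI hg0 hgq using fun q : T => hTS q.2
  refine ⟨T.attach.image g, ?_, ?_, ?_⟩
  · intro x hx
    obtain ⟨q, _, rfl⟩ := Finset.mem_image.1 hx
    exact hg0 q
  · intro x hx
    obtain ⟨q, _, rfl⟩ := Finset.mem_image.1 (Finset.mem_coe.1 hx)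
    exact hgI q
  · have hTspan' : Ideal.span (↑T : Set (MvPolynomial σ R)) = Ideal.span S := hTspan
    rw [← hTspan']
    congr 1
    ext q
    constructor
    · rintro ⟨g', hg', rfl⟩
      obtain ⟨t, -, rfl⟩ := Finset.mem_image.1 hg'
      exact Finset.mem_coe.2 ((hgq t ▸ t.2) : _)
    · intro hq
      refine ⟨g ⟨q, hq⟩, Finset.mem_image.2 ⟨⟨q, hq⟩, Finset.mem_attach _ _, rfl⟩, ?_⟩
      exact hgq ⟨q, hq⟩
end

section
/- Let R be a commutative ring, σ a finite type, m a monomial order on σ →₀ ℕ, I an ideal of MvPolynomial σ R, and G a finite Gröbner basis of I with respect to m. Then every nonzero p ∈ I has a standard representation with respect to G: there is a family of polynomials (q_g)_{g ∈ G} such that p = Σ_{g ∈ G} q_g * g and, for every g ∈ G with q_g * g ≠ 0, m.toSyn (m.degree (q_g * g)) ≤ m.toSyn (m.degree p). -/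
open MvPolynomial

/-- Head coefficient of a polynomial with respect to a monomial order. -/
noncomputable def MonomialOrder.leadCoeff {σ R : Type*} [CommSemiring R] (m : MonomialOrder σ)
    (p : MvPolynomial σ R) : R :=
  p.coeff (m.degree' p)

section Aux

variable {σ R : Type*} [CommSemiring R] (m : MonomialOrder σ)

lemma toSyn_degree_eq (p : MvPolynomial σ R) :
    m.toSyn (m.degree' p) = p.support.sup fun s => m.toSyn s := by
  simp [MonomialOrder.degree']

lemma le_toSyn_degree {p : MvPolynomial σ R} {d : σ →₀ ℕ} (hd : p.coeff d ≠ 0) :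
    m.toSyn d ≤ m.toSyn (m.degree' p) := by
  rw [toSyn_degree_eq]
  exact Finset.le_sup (f := fun s => m.toSyn s) (MvPolynomial.mem_support_iff.2 hd)

lemma coeff_eq_zero_of_degree_lt {p : MvPolynomial σ R} {d : σ →₀ ℕ}
    (h : m.toSyn (m.degree' p) < m.toSyn d) : p.coeff d = 0 := by
  by_contra hc
  exact absurd (le_toSyn_degree m hc) (not_le.2 h)

lemma degree_mem_support {p : MvPolynomial σ R} (hp : p ≠ 0) : m.degree' p ∈ p.support := by
  obtain ⟨b, hb, hbe⟩ := Finset.exists_mem_eq_sup p.support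
    (MvPolynomial.support_nonempty.2 hp) (fun s => m.toSyn s)
  have : m.degree' p = b := by
    rw [MonomialOrder.degree', hbe]
    exact m.toSyn.symm_apply_apply b
  exact this ▸ hb

lemma leadCoeff_ne_zero {p : MvPolynomial σ R} (hp : p ≠ 0) : m.leadCoeff p ≠ 0 :=
  MvPolynomial.mem_support_iff.1 (degree_mem_support m hp)

lemma toSyn_degree_add_le (p q : MvPolynomial σ R) :
    m.toSyn (m.degree' (p + q)) ≤ max (m.toSyn (m.degree' p)) (m.toSyn (m.degree' q)) := by
  classical
  rw [toSyn_degree_eq]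
  apply Finset.sup_le
  intro d hd
  rcases Finset.mem_union.1 (MvPolynomial.support_add hd) with h | h
  · exact le_max_of_le_left (le_trans (Finset.le_sup h) (le_of_eq (toSyn_degree_eq m p).symm))
  · exact le_max_of_le_right (le_trans (Finset.le_sup h) (le_of_eq (toSyn_degree_eq m q).symm))

lemma toSyn_degree_mul_le (p q : MvPolynomial σ R) :
    m.toSyn (m.degree' (p * q)) ≤ m.toSyn (m.degree' p) + m.toSyn (m.degree' q) := by
  classical
  rw [toSyn_degree_eq]
  apply Finset.sup_le
  intro d hd
  obtain ⟨a, ha, b, hb, rfl⟩ := Finset.mem_add.1 (MvPolynomial.support_mul p q hd)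
  rw [map_add]
  exact add_le_add (le_trans (Finset.le_sup ha) (le_of_eq (toSyn_degree_eq m p).symm))
    (le_trans (Finset.le_sup hb) (le_of_eq (toSyn_degree_eq m q).symm))

lemma toSyn_degree_zero : m.toSyn (m.degree' (0 : MvPolynomial σ R)) = 0 := by
  simp [MonomialOrder.degree']

end Aux

/-- Every nonzero element of an ideal has a standard representation with respect to a
Gröbner basis of the ideal. -/
theorem exists_standard_representation {σ R : Type*} [CommRing R] [Finite σ]
    (m : MonomialOrder σ) (I : Ideal (MvPolynomial σ R)) (G : Finset (MvPolynomial σ R))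
    (hG0 : ∀ g ∈ G, g ≠ 0) (hGI : (G : Set (MvPolynomial σ R)) ⊆ I)
    (hGB : Ideal.span {q : MvPolynomial σ R |
        ∃ g ∈ G, q = monomial (m.degree' g) (m.leadCoeff g)} =
      Ideal.span {q : MvPolynomial σ R |
        ∃ p ∈ I, p ≠ 0 ∧ q = monomial (m.degree' p) (m.leadCoeff p)}) :
    ∀ p ∈ I, p ≠ 0 →
      ∃ q : MvPolynomial σ R → MvPolynomial σ R,
        p = ∑ g ∈ G, q g * g ∧
        ∀ g ∈ G, q g * g ≠ 0 → m.toSyn (m.degree' (q g * g)) ≤ m.toSyn (m.degree' p) := by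
  classical
  -- strengthen: unconditional degree bound
  suffices H : ∀ d : m.syn, ∀ p ∈ I, p ≠ 0 → m.toSyn (m.degree' p) = d →
      ∃ q : MvPolynomial σ R → MvPolynomial σ R,
        p = ∑ g ∈ G, q g * g ∧
        ∀ g ∈ G, m.toSyn (m.degree' (q g * g)) ≤ m.toSyn (m.degree' p) by
    intro p hpI hp0
    obtain ⟨q, hq1, hq2⟩ := H _ p hpI hp0 rfl
    exact ⟨q, hq1, fun g hg _ => hq2 g hg⟩
  intro d
  induction d using WellFoundedLT.induction with
  | ind d ih =>
  intro p hpI hp0 hdeg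
  -- head of p lies in the span of heads of G
  have hmem : (monomial (m.degree' p) (m.leadCoeff p) : MvPolynomial σ R) ∈
      Ideal.span {q : MvPolynomial σ R |
        ∃ g ∈ G, q = monomial (m.degree' g) (m.leadCoeff g)} := by
    rw [hGB]
    exact Ideal.subset_span ⟨p, hpI, hp0, rfl⟩
  obtain ⟨c, hcsupp, hcsum⟩ := Submodule.mem_span_set.1 hmem
  -- choice of g for each generator in the support of c
  set gs : MvPolynomial σ R → MvPolynomial σ R := fun s =>
    if h : ∃ g ∈ G, s = monomial (m.degree' g) (m.leadCoeff g) then h.choose else 0 with hgs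
  have hgs_mem : ∀ s ∈ c.support, gs s ∈ G ∧ s = monomial (m.degree' (gs s)) (m.leadCoeff (gs s)) := by
    intro s hs
    have h : ∃ g ∈ G, s = monomial (m.degree' g) (m.leadCoeff g) := hcsupp hs
    simp only [hgs, dif_pos h]
    exact ⟨h.choose_spec.1, h.choose_spec.2⟩
  -- the coefficients
  set k : MvPolynomial σ R → R := fun g =>
    if m.degree' g ≤ m.degree' p then
      (∑ s ∈ c.support.filter (fun s => gs s = g), c s).coeff (m.degree' p - m.degree' g)
    else 0 with hk
  set h : MvPolynomial σ R → MvPolynomial σ R := fun g =>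
    monomial (m.degree' p - m.degree' g) (k g) with hh
  -- key coefficient identity
  have hlead : m.leadCoeff p = ∑ g ∈ G, k g * m.leadCoeff g := by
    have h1 : m.leadCoeff p = (c.sum fun mi r => r • mi).coeff (m.degree' p) := by
      rw [hcsum, coeff_monomial, if_pos rfl]
    rw [h1, Finsupp.sum]
    have h2 : ∀ s ∈ c.support, (c s • s : MvPolynomial σ R) = c s * s := fun _ _ => rfl
    rw [Finset.sum_congr rfl h2]
    rw [← Finset.sum_fiberwise_of_maps_to (fun s hs => (hgs_mem s hs).1)
      (fun s => (c s * s : MvPolynomial σ R))]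
    rw [MvPolynomial.coeff_sum]
    apply Finset.sum_congr rfl
    intro g hg
    rw [MvPolynomial.coeff_sum]
    have h3 : ∀ s ∈ c.support.filter (fun s => gs s = g),
        (c s * s).coeff (m.degree' p) =
          (c s * monomial (m.degree' g) (m.leadCoeff g)).coeff (m.degree' p) := by
      intro s hs
      obtain ⟨hs1, hs2⟩ := Finset.mem_filter.1 hs
      rw [← hs2, ← (hgs_mem s hs1).2]
    rw [Finset.sum_congr rfl h3]
    simp_rw [coeff_mul_monomial']
    by_cases hle : m.degree' g ≤ m.degree' p
    · simp only [if_pos hle]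
      rw [← Finset.sum_mul, hk]
      simp only [if_pos hle]
      rw [MvPolynomial.coeff_sum]
    · simp only [if_neg hle, hk]
      simp [if_neg hle]
  -- degree bound on h g * g
  have hdeg_h : ∀ g ∈ G, m.toSyn (m.degree' (h g * g)) ≤ m.toSyn (m.degree' p) := by
    intro g hg
    by_cases hle : m.degree' g ≤ m.degree' p
    · refine le_trans (toSyn_degree_mul_le m _ _) ?_
      have hmono : m.toSyn (m.degree' (h g)) ≤ m.toSyn (m.degree' p - m.degree' g) := by
        rw [toSyn_degree_eq]
        apply Finset.sup_le
        intro e he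
        have := MvPolynomial.support_monomial_subset (s := m.degree' p - m.degree' g)
          (a := k g) he
        rw [Finset.mem_singleton] at this
        exact le_of_eq (congrArg m.toSyn this)
      refine le_trans (add_le_add_left hmono _) ?_
      rw [← map_add]
      apply m.toSyn_monotone
      rw [tsub_add_cancel_of_le hle]
    · have : h g = 0 := by
        rw [hh]; simp only [hk, if_neg hle, monomial_zero]
      rw [this, zero_mul, toSyn_degree_zero]
      exact bot_le
  -- remainder
  set p' : MvPolynomial σ R := p - ∑ g ∈ G, h g * g with hp'
  have hp'I : p' ∈ I := by
    apply Ideal.sub_mem _ hpI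
    exact Ideal.sum_mem _ (fun g hg => Ideal.mul_mem_left _ _ (hGI hg))
  -- coefficient of sum at degree p is leadCoeff p
  have hcoeff_sum : (∑ g ∈ G, h g * g).coeff (m.degree' p) = m.leadCoeff p := by
    rw [MvPolynomial.coeff_sum, hlead]
    apply Finset.sum_congr rfl
    intro g hg
    rw [hh]
    rw [show (monomial (m.degree' p - m.degree' g) (k g) * g : MvPolynomial σ R) =
      g * monomial (m.degree' p - m.degree' g) (k g) from mul_comm _ _]
    rw [coeff_mul_monomial', if_pos tsub_le_self]
    by_cases hle : m.degree' g ≤ m.degree' p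
    · rw [tsub_tsub_cancel_of_le hle, mul_comm]
      rfl
    · simp only [hk, if_neg hle, mul_zero, zero_mul]
  -- every support element of p' is strictly below degree p
  have hp'small : ∀ e, p'.coeff e ≠ 0 → m.toSyn e < m.toSyn (m.degree' p) := by
    intro e he
    rcases lt_trichotomy (m.toSyn e) (m.toSyn (m.degree' p)) with h1 | h1 | h1
    · exact h1
    · exfalso
      have : e = m.degree' p := m.toSyn.injective h1
      apply he
      rw [hp', MvPolynomial.coeff_sub, this, hcoeff_sum]
      exact sub_self _
    · exfalso
      apply he
      rw [hp', MvPolynomial.coeff_sub]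
      rw [coeff_eq_zero_of_degree_lt m h1]
      have : (∑ g ∈ G, h g * g).coeff e = 0 := by
        rw [MvPolynomial.coeff_sum]
        apply Finset.sum_eq_zero
        intro g hg
        exact coeff_eq_zero_of_degree_lt m (lt_of_le_of_lt (hdeg_h g hg) h1)
      rw [this, sub_zero]
  by_cases hp'0 : p' = 0
  · refine ⟨h, ?_, fun g hg => hdeg_h g hg⟩
    have : p = ∑ g ∈ G, h g * g := by
      rw [← sub_eq_zero]; exact hp'0
    exact this
  · have hp'deg : m.toSyn (m.degree' p') < m.toSyn (m.degree' p) :=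
      hp'small _ (leadCoeff_ne_zero m hp'0)
    obtain ⟨q', hq'1, hq'2⟩ := ih (m.toSyn (m.degree' p')) (hdeg ▸ hp'deg) p' hp'I hp'0 rfl
    refine ⟨fun g => h g + q' g, ?_, ?_⟩
    · have : ∑ g ∈ G, (h g + q' g) * g = (∑ g ∈ G, h g * g) + ∑ g ∈ G, q' g * g := by
        rw [← Finset.sum_add_distrib]
        exact Finset.sum_congr rfl (fun g _ => add_mul _ _ _)
      rw [this, ← hq'1, hp']
      ring
    · intro g hg
      have : (h g + q' g) * g = h g * g + q' g * g := add_mul _ _ _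
      rw [this]
      refine le_trans (toSyn_degree_add_le m _ _) (max_le (hdeg_h g hg) ?_)
      exact le_trans (hq'2 g hg) (le_of_lt hp'deg)
end

section
/- Let R be a commutative ring, σ a finite type, and m a monomial order on σ →₀ ℕ. Let (c_i, t_i)_{i ∈ F} be a finite family with c_i : R and t_i : σ →₀ ℕ. Then for c : R and t : σ →₀ ℕ, the monomial c·X^t (i.e., monomial t c) lies in the ideal of MvPolynomial σ R generated by {monomial t_i c_i | i ∈ F} if and only if c lies in the ideal of R generated by {c_i | i ∈ F, t_i ≤ t}. -/
open MvPolynomial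

private lemma coeff_mem_span_aux {σ R ι : Type*} [CommRing R]
    (F : Finset ι) (ci : ι → R) (ti : ι → (σ →₀ ℕ))
    {p : MvPolynomial σ R}
    (hp : p ∈ Ideal.span {q : MvPolynomial σ R | ∃ i ∈ F, q = monomial (ti i) (ci i)}) :
    ∀ t : σ →₀ ℕ, coeff t p ∈ Ideal.span {a : R | ∃ i ∈ F, ti i ≤ t ∧ a = ci i} := by
  classical
  refine Submodule.span_induction ?_ ?_ ?_ ?_ hp
  · rintro q ⟨i, hi, rfl⟩ t
    rw [coeff_monomial]
    split_ifs with h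
    · exact Ideal.subset_span ⟨i, hi, h ▸ le_refl _, rfl⟩
    · exact Ideal.zero_mem _
  · intro t; simp only [coeff_zero]; exact Ideal.zero_mem _
  · intro x y _ _ hx hy t
    rw [coeff_add]; exact Ideal.add_mem _ (hx t) (hy t)
  · intro q x _ hx t
    rw [smul_eq_mul, coeff_mul]
    refine Ideal.sum_mem _ fun uv huv => Ideal.mul_mem_left _ _ ?_
    have hle : uv.2 ≤ t := by
      rw [Finset.HasAntidiagonal.mem_antidiagonal] at huv
      exact huv ▸ le_add_self
    exact Ideal.span_mono (fun a ha => by obtain ⟨i, hi, hti, h⟩ := ha; exact ⟨i, hi, hti.trans hle, h⟩) (hx uv.2)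

/-- A monomial c·Xᵗ belongs to the ideal generated by a finite family of monomials
cᵢ·X^{tᵢ} if and only if c belongs to the ideal of R generated by those cᵢ whose
term tᵢ divides t. -/
theorem monomial_mem_span_monomials_iff {σ R ι : Type*} [CommRing R] [Finite σ]
    (m : MonomialOrder σ) (F : Finset ι) (ci : ι → R) (ti : ι → (σ →₀ ℕ))
    (c : R) (t : σ →₀ ℕ) :
    (monomial t c : MvPolynomial σ R) ∈
        Ideal.span {q : MvPolynomial σ R | ∃ i ∈ F, q = monomial (ti i) (ci i)} ↔
      c ∈ Ideal.span {a : R | ∃ i ∈ F, ti i ≤ t ∧ a = ci i} := by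
  classical
  constructor
  · intro h
    have := coeff_mem_span_aux F ci ti h t
    simpa [coeff_monomial] using this
  · intro h
    refine Submodule.span_induction ?_ ?_ ?_ ?_ h
    · rintro a ⟨i, hi, hti, rfl⟩
      have : (monomial t (ci i) : MvPolynomial σ R)
          = monomial (t - ti i) 1 * monomial (ti i) (ci i) := by
        rw [monomial_mul, one_mul, tsub_add_cancel_of_le hti]
      rw [this]
      exact Ideal.mul_mem_left _ _ (Ideal.subset_span ⟨i, hi, rfl⟩)
    · simp only [map_zero]; exact Ideal.zero_mem _
    · intro x y _ _ hx hy; rw [map_add]; exact Ideal.add_mem _ hx hy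
    · intro r x _ hx
      have : (monomial t (r • x) : MvPolynomial σ R) = C r * monomial t x := by
        rw [smul_eq_mul, C_mul_monomial]
      rw [this]
      exact Ideal.mul_mem_left _ _ hx
end

section
/- Buchberger's criterion over a field: let k be a field, σ a finite type, m a monomial order on σ →₀ ℕ, and G a finite set of nonzero polynomials in MvPolynomial σ k. Suppose that for every pair g₁, g₂ ∈ G, setting t = m.degree g₁ ⊔ m.degree g₂ (the pointwise supremum), the S-polynomial S(g₁,g₂) = (m.leadCoeff g₂) • X^(t − m.degree g₁) * g₁ − (m.leadCoeff g₁) • X^(t − m.degree g₂) * g₂ admits a representation S(g₁,g₂) = Σ_{g ∈ G} q_g * g in which every nonzero summand q_g * g satisfies m.toSyn (m.degree (q_g * g)) < m.toSyn t. Then G is a Gröbner basis of the ideal Ideal.span G: the ideal generated by {monomial (m.degree g) (m.leadCoeff g) | g ∈ G} equals the ideal generated by {monomial (m.degree p) (m.leadCoeff p) | p ∈ Ideal.span G, p ≠ 0}. -/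
open MvPolynomial

set_option maxHeartbeats 1000000

namespace Buch
variable {σ k : Type*} [Field k] (m : MonomialOrder σ)

lemma toSyn_degree (p : MvPolynomial σ k) :
    m.toSyn (m.degree' p) = p.support.sup fun s => m.toSyn s := by
  simp [MonomialOrder.degree']

lemma le_degree {p : MvPolynomial σ k} {d : σ →₀ ℕ} (hd : d ∈ p.support) :
    m.toSyn d ≤ m.toSyn (m.degree' p) := by
  rw [toSyn_degree]; exact Finset.le_sup hd

lemma coeff_eq_zero_of_lt {p : MvPolynomial σ k} {d : σ →₀ ℕ}
    (hd : m.toSyn (m.degree' p) < m.toSyn d) : p.coeff d = 0 := by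
  by_contra h
  exact absurd (le_degree m (by simpa [mem_support_iff] using h)) (not_le.mpr hd)

lemma degree_mem_support {p : MvPolynomial σ k} (hp : p ≠ 0) :
    m.degree' p ∈ p.support := by
  obtain ⟨d, hd, hsup⟩ := Finset.exists_mem_eq_sup p.support
    (by simpa using hp) (fun s => m.toSyn s)
  have : m.degree' p = d := by simp [MonomialOrder.degree', hsup]
  rwa [this]

lemma leadCoeff_ne_zero {p : MvPolynomial σ k} (hp : p ≠ 0) :
    m.leadCoeff p ≠ 0 := by
  have := degree_mem_support m hp
  simpa [MonomialOrder.leadCoeff, mem_support_iff] using this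

lemma degree_zero : m.degree' (0 : MvPolynomial σ k) = 0 := by
  simp [MonomialOrder.degree']

lemma degree_le_of_coeff {p : MvPolynomial σ k} {b : m.syn}
    (h : ∀ d : σ →₀ ℕ, p.coeff d ≠ 0 → m.toSyn d ≤ b) :
    m.toSyn (m.degree' p) ≤ b := by
  rw [toSyn_degree]
  exact Finset.sup_le fun d hd => h d (by simpa [mem_support_iff] using hd)

lemma degree_sum_le {ι : Type*} (s : Finset ι) (f : ι → MvPolynomial σ k) :
    m.toSyn (m.degree' (∑ i ∈ s, f i)) ≤ s.sup fun i => m.toSyn (m.degree' (f i)) := by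
  apply degree_le_of_coeff
  intro d hd
  rw [coeff_sum] at hd
  obtain ⟨i, hi, hne⟩ := Finset.exists_ne_zero_of_sum_ne_zero hd
  exact le_trans (le_degree m (by simpa [mem_support_iff] using hne))
    (Finset.le_sup (f := fun i => m.toSyn (m.degree' (f i))) hi)

lemma degree_add_le (p q : MvPolynomial σ k) :
    m.toSyn (m.degree' (p + q)) ≤ max (m.toSyn (m.degree' p)) (m.toSyn (m.degree' q)) := by
  apply degree_le_of_coeff
  intro d hd
  rw [coeff_add] at hd
  rcases (by by_contra h; push_neg at h; simp [h.1, h.2] at hd :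
      p.coeff d ≠ 0 ∨ q.coeff d ≠ 0) with h | h
  · exact le_max_of_le_left (le_degree m (by simpa [mem_support_iff] using h))
  · exact le_max_of_le_right (le_degree m (by simpa [mem_support_iff] using h))

lemma degree_mul_le (p q : MvPolynomial σ k) :
    m.toSyn (m.degree' (p * q)) ≤ m.toSyn (m.degree' p) + m.toSyn (m.degree' q) := by
  classical
  apply degree_le_of_coeff
  intro d hd
  rw [coeff_mul] at hd
  obtain ⟨⟨u, v⟩, huv, hne⟩ := Finset.exists_ne_zero_of_sum_ne_zero hd
  have hu : p.coeff u ≠ 0 := fun h => hne (by simp [h])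
  have hv : q.coeff v ≠ 0 := fun h => hne (by simp [h])
  have huv' : u + v = d := (Finset.HasAntidiagonal.mem_antidiagonal.mp huv)
  have hx : m.toSyn d = m.toSyn u + m.toSyn v := by rw [← huv', map_add]
  rw [hx]
  exact add_le_add (le_degree m (by simpa [mem_support_iff] using hu))
    (le_degree m (by simpa [mem_support_iff] using hv))

lemma coeff_mul_degree_add_degree (p q : MvPolynomial σ k) :
    (p * q).coeff (m.degree' p + m.degree' q) = m.leadCoeff p * m.leadCoeff q := by
  classical
  rw [coeff_mul]
  have hmem : (m.degree' p, m.degree' q) ∈ Finset.HasAntidiagonal.antidiagonal (m.degree' p + m.degree' q) :=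
    Finset.HasAntidiagonal.mem_antidiagonal.mpr rfl
  rw [Finset.sum_eq_single_of_mem (m.degree' p, m.degree' q) hmem]
  · rfl
  · rintro ⟨u, v⟩ huv hne
    have hsum : u + v = m.degree' p + m.degree' q := Finset.HasAntidiagonal.mem_antidiagonal.mp huv
    by_contra h
    have hu : p.coeff u ≠ 0 := fun h' => h (by simp [h'])
    have hv : q.coeff v ≠ 0 := fun h' => h (by simp [h'])
    have h1 : m.toSyn u ≤ m.toSyn (m.degree' p) :=
      le_degree m (by simpa [mem_support_iff] using hu)
    have h2 : m.toSyn v ≤ m.toSyn (m.degree' q) :=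
      le_degree m (by simpa [mem_support_iff] using hv)
    have heq : m.toSyn u + m.toSyn v = m.toSyn (m.degree' p) + m.toSyn (m.degree' q) := by
      rw [← map_add, ← map_add, hsum]
    have hu' : m.toSyn u = m.toSyn (m.degree' p) := by
      apply le_antisymm h1
      by_contra h'
      push_neg at h'
      exact absurd heq (ne_of_lt (add_lt_add_of_lt_of_le h' h2))
    have hu'' : u = m.degree' p := m.toSyn.injective hu'
    have hv'' : v = m.degree' q := by
      have := hsum
      rw [hu''] at this
      exact add_left_cancel this
    exact hne (by rw [hu'', hv''])

lemma degree_mul {p q : MvPolynomial σ k} (hp : p ≠ 0) (hq : q ≠ 0) :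
    m.degree' (p * q) = m.degree' p + m.degree' q := by
  have hc : (p * q).coeff (m.degree' p + m.degree' q) ≠ 0 := by
    rw [coeff_mul_degree_add_degree]
    exact mul_ne_zero (leadCoeff_ne_zero m hp) (leadCoeff_ne_zero m hq)
  apply m.toSyn.injective
  apply le_antisymm
  · rw [map_add]; exact degree_mul_le m p q
  · exact le_degree m (by simpa [mem_support_iff] using hc)

lemma leadCoeff_mul {p q : MvPolynomial σ k} (hp : p ≠ 0) (hq : q ≠ 0) :
    m.leadCoeff (p * q) = m.leadCoeff p * m.leadCoeff q := by
  rw [MonomialOrder.leadCoeff, degree_mul m hp hq, coeff_mul_degree_add_degree]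

lemma degree_monomial {d : σ →₀ ℕ} {c : k} (hc : c ≠ 0) :
    m.degree' (monomial d c) = d := by
  classical
  rw [MonomialOrder.degree', support_monomial, if_neg hc, Finset.sup_singleton,
    AddEquiv.symm_apply_apply]

lemma leadCoeff_monomial {d : σ →₀ ℕ} {c : k} (hc : c ≠ 0) :
    m.leadCoeff (monomial d c) = c := by
  classical
  rw [MonomialOrder.leadCoeff, degree_monomial m hc, coeff_monomial, if_pos rfl]

lemma degree_smul_le (c : k) (p : MvPolynomial σ k) :
    m.toSyn (m.degree' (c • p)) ≤ m.toSyn (m.degree' p) := by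
  apply degree_le_of_coeff
  intro d hd
  rw [coeff_smul] at hd
  exact le_degree m (by simpa [mem_support_iff] using right_ne_zero_of_mul hd)

lemma degree_tail_lt {p : MvPolynomial σ k} (hp : p ≠ 0)
    (ht : p - monomial (m.degree' p) (m.leadCoeff p) ≠ 0) :
    m.toSyn (m.degree' (p - monomial (m.degree' p) (m.leadCoeff p))) <
      m.toSyn (m.degree' p) := by
  classical
  set r := p - monomial (m.degree' p) (m.leadCoeff p) with hr
  have hmem := degree_mem_support m ht
  rw [mem_support_iff] at hmem
  have hne : m.degree' r ≠ m.degree' p := by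
    intro h
    apply hmem
    rw [hr, coeff_sub, h, coeff_monomial, if_pos rfl, MonomialOrder.leadCoeff, sub_self]
  have hcoeff : p.coeff (m.degree' r) ≠ 0 := by
    intro h
    apply hmem
    rw [hr, coeff_sub, h, coeff_monomial, if_neg (fun h' => hne h'.symm), zero_sub, neg_eq_zero]
  exact lt_of_le_of_ne (le_degree m (by simpa [mem_support_iff] using hcoeff))
    (fun h => hne (m.toSyn.injective h))


open Classical in
lemma descent (G : Finset (MvPolynomial σ k)) (hG0 : ∀ g ∈ G, g ≠ 0)
    (hS : ∀ g₁ ∈ G, ∀ g₂ ∈ G,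
      ∃ q : MvPolynomial σ k → MvPolynomial σ k,
        (m.leadCoeff g₂ • (monomial ((m.degree' g₁ ⊔ m.degree' g₂) - m.degree' g₁) 1
            : MvPolynomial σ k) * g₁ -
          m.leadCoeff g₁ • (monomial ((m.degree' g₁ ⊔ m.degree' g₂) - m.degree' g₂) 1
            : MvPolynomial σ k) * g₂) = ∑ g ∈ G, q g * g ∧
        ∀ g ∈ G, q g * g ≠ 0 →
          m.toSyn (m.degree' (q g * g)) < m.toSyn (m.degree' g₁ ⊔ m.degree' g₂))
    (p : MvPolynomial σ k) (n : ℕ) (q : MvPolynomial σ k → MvPolynomial σ k)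
    (hq : p = ∑ g ∈ G, q g * g)
    (hlt : m.toSyn (m.degree' p) < G.sup fun g => m.toSyn (m.degree' (q g * g)))
    (hcard : (G.filter fun g => q g * g ≠ 0 ∧
        m.toSyn (m.degree' (q g * g)) = G.sup fun g => m.toSyn (m.degree' (q g * g))).card ≤ n) :
    ∃ q' : MvPolynomial σ k → MvPolynomial σ k, p = (∑ g ∈ G, q' g * g) ∧
      (G.sup fun g => m.toSyn (m.degree' (q' g * g))) <
        G.sup fun g => m.toSyn (m.degree' (q g * g)) := by
  induction n generalizing q with
  | zero =>
    exfalso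
    set δ := G.sup fun g => m.toSyn (m.degree' (q g * g)) with hδdef
    have hδpos : (0 : m.syn) < δ := lt_of_le_of_lt (by rw [← MonomialOrder.bot_eq_zero]; exact bot_le) hlt
    have hGne : G.Nonempty := by
      by_contra h
      rw [Finset.not_nonempty_iff_eq_empty] at h
      rw [hδdef, h, Finset.sup_empty, MonomialOrder.bot_eq_zero] at hδpos
      exact absurd hδpos (lt_irrefl 0)
    obtain ⟨g₁, hg₁G, hg₁sup⟩ := Finset.exists_mem_eq_sup G hGne
      (fun g => m.toSyn (m.degree' (q g * g)))
    have hg₁ne : q g₁ * g₁ ≠ 0 := by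
      intro h
      rw [h, degree_zero] at hg₁sup
      simp only [map_zero] at hg₁sup
      rw [hδdef, hg₁sup] at hδpos
      exact absurd hδpos (lt_irrefl _)
    have : g₁ ∈ G.filter fun g => q g * g ≠ 0 ∧
        m.toSyn (m.degree' (q g * g)) = δ :=
      Finset.mem_filter.mpr ⟨hg₁G, hg₁ne, hg₁sup.symm⟩
    have := Finset.card_pos.mpr ⟨g₁, this⟩
    omega
  | succ n ih =>
    set δ := G.sup fun g => m.toSyn (m.degree' (q g * g)) with hδdef
    have hδpos : (0 : m.syn) < δ :=
      lt_of_le_of_lt (by rw [← MonomialOrder.bot_eq_zero]; exact bot_le) hlt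
    have hGne : G.Nonempty := by
      by_contra h
      rw [Finset.not_nonempty_iff_eq_empty] at h
      rw [hδdef, h, Finset.sup_empty, MonomialOrder.bot_eq_zero] at hδpos
      exact absurd hδpos (lt_irrefl 0)
    obtain ⟨g₁, hg₁G, hg₁sup⟩ := Finset.exists_mem_eq_sup G hGne
      (fun g => m.toSyn (m.degree' (q g * g)))
    rw [← hδdef] at hg₁sup
    have hg₁ne : q g₁ * g₁ ≠ 0 := by
      intro h
      rw [h, degree_zero] at hg₁sup
      simp only [map_zero] at hg₁sup
      rw [hg₁sup] at hδpos
      exact absurd hδpos (lt_irrefl _)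
    set d := m.toSyn.symm δ with hddef
    have hd : m.toSyn d = δ := m.toSyn.apply_symm_apply δ
    -- coefficient of p at d is zero
    have hpd : p.coeff d = 0 := coeff_eq_zero_of_lt m (by rw [hd]; exact hlt)
    -- the strictly-below-δ property for g outside the top set
    have hbelow : ∀ g ∈ G, ¬(q g * g ≠ 0 ∧ m.toSyn (m.degree' (q g * g)) = δ) →
        m.toSyn (m.degree' (q g * g)) < δ := by
      intro g hg h
      by_cases h0 : q g * g = 0
      · rw [h0, degree_zero, map_zero]; exact hδpos
      · refine lt_of_le_of_ne ?_ fun he => h ⟨h0, he⟩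
        exact hδdef ▸ Finset.le_sup (f := fun g => m.toSyn (m.degree' (q g * g))) hg
    -- there is a second element attaining δ
    have hg₂ : ∃ g₂ ∈ G, (q g₂ * g₂ ≠ 0 ∧ m.toSyn (m.degree' (q g₂ * g₂)) = δ) ∧ g₂ ≠ g₁ := by
      by_contra hno
      push_neg at hno
      have hsingle : ∀ g ∈ G, g ≠ g₁ → (q g * g).coeff d = 0 := by
        intro g hg hne
        have hlt' : m.toSyn (m.degree' (q g * g)) < δ :=
          hbelow g hg fun hA => hne (hno g hg hA)
        exact coeff_eq_zero_of_lt m (by rw [hd]; exact hlt')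
      have hcoeq : p.coeff d = (q g₁ * g₁).coeff d := by
        rw [hq, coeff_sum]
        exact Finset.sum_eq_single_of_mem g₁ hg₁G fun g hg hne => hsingle g hg hne
      have hdeg₁ : m.degree' (q g₁ * g₁) = d := m.toSyn.injective (by rw [hd, ← hg₁sup])
      have : (q g₁ * g₁).coeff d ≠ 0 := by
        rw [← hdeg₁]
        exact leadCoeff_ne_zero m hg₁ne
      rw [hcoeq] at hpd
      exact this hpd
    obtain ⟨g₂, hg₂G, ⟨hg₂ne, hg₂sup⟩, hg₂g₁⟩ := hg₂
    -- basic nonvanishing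
    have hq₁0 : q g₁ ≠ 0 := left_ne_zero_of_mul hg₁ne
    have hq₂0 : q g₂ ≠ 0 := left_ne_zero_of_mul hg₂ne
    have hg₁0 : g₁ ≠ 0 := hG0 g₁ hg₁G
    have hg₂0 : g₂ ≠ 0 := hG0 g₂ hg₂G
    -- degree bookkeeping
    have hdeg₁ : m.degree' (q g₁) + m.degree' g₁ = d := by
      apply m.toSyn.injective
      rw [← degree_mul m hq₁0 hg₁0, hd, hg₁sup]
    have hdeg₂ : m.degree' (q g₂) + m.degree' g₂ = d := by
      apply m.toSyn.injective
      rw [← degree_mul m hq₂0 hg₂0, hd, hg₂sup]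
    set a₁ := m.degree' (q g₁) with ha₁
    set a₂ := m.degree' (q g₂) with ha₂
    set b₁ := m.degree' g₁ with hb₁
    set b₂ := m.degree' g₂ with hb₂
    set γ := b₁ ⊔ b₂ with hγ
    have hb₁γ : b₁ ≤ γ := le_sup_left
    have hb₂γ : b₂ ≤ γ := le_sup_right
    have hγd : γ ≤ d := sup_le (hdeg₁ ▸ le_add_self) (hdeg₂ ▸ le_add_self)
    have e1 : (d - γ) + (γ - b₁) = a₁ := by
      rw [tsub_add_tsub_cancel hγd hb₁γ]
      exact (eq_tsub_of_add_eq hdeg₁).symm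
    have e2 : (d - γ) + (γ - b₂) = a₂ := by
      rw [tsub_add_tsub_cancel hγd hb₂γ]
      exact (eq_tsub_of_add_eq hdeg₂).symm
    have hdγγ : (d - γ) + γ = d := tsub_add_cancel_of_le hγd
    -- the S-polynomial representation
    obtain ⟨s, hsrep, hsdeg⟩ := hS g₁ hg₁G g₂ hg₂G
    -- key identity
    have hK : (monomial (d - γ) (1 : k)) * (∑ g ∈ G, s g * g) =
        m.leadCoeff g₂ • ((monomial a₁ (1 : k)) * g₁) -
          m.leadCoeff g₁ • ((monomial a₂ (1 : k)) * g₂) := by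
      rw [← hsrep, mul_sub, ← mul_assoc, ← mul_assoc, mul_smul_comm, mul_smul_comm,
        monomial_mul, monomial_mul, one_mul, e1, e2, smul_mul_assoc, smul_mul_assoc]
    set c := m.leadCoeff (q g₁) / m.leadCoeff g₂ with hc
    have hlc₂ : m.leadCoeff g₂ ≠ 0 := leadCoeff_ne_zero m hg₂0
    have hM : (monomial a₁ (m.leadCoeff (q g₁))) * g₁ =
        c • ((monomial (d - γ) (1 : k)) * (∑ g ∈ G, s g * g)) +
          (c * m.leadCoeff g₁) • ((monomial a₂ (1 : k)) * g₂) := by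
      rw [hK, smul_sub, smul_smul, smul_smul, hc, div_mul_cancel₀ _ hlc₂,
        sub_add_cancel, ← smul_mul_assoc, smul_monomial, smul_eq_mul, mul_one]
    -- the new representation
    set q' : MvPolynomial σ k → MvPolynomial σ k := fun g =>
      q g + c • ((monomial (d - γ) (1 : k)) * s g) +
        (if g = g₁ then -(monomial a₁ (m.leadCoeff (q g₁))) else 0) +
        (if g = g₂ then (c * m.leadCoeff g₁) • (monomial a₂ (1 : k)) else 0) with hq'def
    have hrep' : p = ∑ g ∈ G, q' g * g := by
      have hsum : (∑ g ∈ G, q' g * g) =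
          (∑ g ∈ G, q g * g) + c • ((monomial (d - γ) (1 : k)) * ∑ g ∈ G, s g * g) +
            (-(monomial a₁ (m.leadCoeff (q g₁)) * g₁)) +
            ((c * m.leadCoeff g₁) • (monomial a₂ (1 : k))) * g₂ := by
        simp only [hq'def, add_mul, ite_mul, zero_mul, neg_mul, Finset.sum_add_distrib]
        rw [Finset.sum_ite_eq' G g₁, Finset.sum_ite_eq' G g₂, if_pos hg₁G, if_pos hg₂G]
        simp only [smul_mul_assoc, mul_assoc, ← Finset.smul_sum, ← Finset.mul_sum]
      rw [hsum, ← hq]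
      simp only [smul_eq_C_mul] at hM ⊢
      linear_combination hM
    -- degree bounds
    have hT : ∀ g ∈ G,
        m.toSyn (m.degree' ((c • ((monomial (d - γ) (1 : k)) * s g)) * g)) < δ := by
      intro g hg
      have hTeq : (c • ((monomial (d - γ) (1 : k)) * s g)) * g =
          c • ((monomial (d - γ) (1 : k)) * (s g * g)) := by
        rw [smul_mul_assoc, mul_assoc]
      rw [hTeq]
      refine lt_of_le_of_lt (degree_smul_le m _ _) ?_
      by_cases h0 : s g * g = 0
      · rw [h0, mul_zero, degree_zero, map_zero]; exact hδpos
      · refine lt_of_le_of_lt (degree_mul_le m _ _) ?_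
        rw [degree_monomial m (one_ne_zero)]
        have hlt1 : m.toSyn (m.degree' (s g * g)) < m.toSyn γ := hsdeg g hg h0
        have h2 : m.toSyn (d - γ) + m.toSyn γ = δ := by rw [← map_add, hdγγ, hd]
        exact lt_of_lt_of_le (add_lt_add_right hlt1 (m.toSyn (d - γ))) (le_of_eq h2)
    have hg₁new : m.toSyn (m.degree' (q' g₁ * g₁)) < δ := by
      have hsplit : q' g₁ * g₁ =
          (q g₁ - monomial a₁ (m.leadCoeff (q g₁))) * g₁ +
            (c • ((monomial (d - γ) (1 : k)) * s g₁)) * g₁ := by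
        simp only [hq'def]
        rw [if_neg (show ¬ g₁ = g₂ from fun h => hg₂g₁ h.symm), if_pos trivial]
        ring
      rw [hsplit]
      refine lt_of_le_of_lt (degree_add_le m _ _) (max_lt ?_ (hT g₁ hg₁G))
      by_cases ht0 : q g₁ - monomial a₁ (m.leadCoeff (q g₁)) = 0
      · rw [ht0, zero_mul, degree_zero, map_zero]; exact hδpos
      · refine lt_of_le_of_lt (degree_mul_le m _ _) ?_
        have htail := degree_tail_lt m hq₁0 ht0
        have h2 := add_lt_add_left htail (m.toSyn (m.degree' g₁))
        have h3 : m.toSyn a₁ + m.toSyn b₁ = δ := by rw [← map_add, hdeg₁, hd]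
        exact lt_of_lt_of_le h2 (le_of_eq h3)
    have hg₂extra :
        m.toSyn (m.degree' (((c * m.leadCoeff g₁) • (monomial a₂ (1 : k))) * g₂)) ≤ δ := by
      rw [smul_mul_assoc]
      refine le_trans (degree_smul_le m _ _) (le_trans (degree_mul_le m _ _) ?_)
      rw [degree_monomial m (one_ne_zero), ← map_add, hdeg₂, hd]
    have hle : ∀ g ∈ G, m.toSyn (m.degree' (q' g * g)) ≤ δ := by
      intro g hg
      by_cases h1 : g = g₁
      · exact h1 ▸ (hg₁new).le
      by_cases h2 : g = g₂
      · rw [h2]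
        have hsplit : q' g₂ * g₂ =
            (q g₂ * g₂ + (c • ((monomial (d - γ) (1 : k)) * s g₂)) * g₂) +
              ((c * m.leadCoeff g₁) • (monomial a₂ (1 : k))) * g₂ := by
          simp only [hq'def]
          rw [if_neg (show ¬ g₂ = g₁ from hg₂g₁), if_pos trivial]
          ring
        rw [hsplit]
        refine le_trans (degree_add_le m _ _) (max_le (le_trans (degree_add_le m _ _)
          (max_le ?_ (hT g₂ hg₂G).le)) hg₂extra)
        exact hδdef ▸ Finset.le_sup (f := fun g => m.toSyn (m.degree' (q g * g))) hg₂G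
      · have hsplit : q' g * g =
            q g * g + (c • ((monomial (d - γ) (1 : k)) * s g)) * g := by
          simp only [hq'def]
          rw [if_neg h1, if_neg h2]
          ring
        rw [hsplit]
        refine le_trans (degree_add_le m _ _) (max_le ?_ (hT g hg).le)
        exact hδdef ▸ Finset.le_sup (f := fun g => m.toSyn (m.degree' (q g * g))) hg
    have hδ'le : (G.sup fun g => m.toSyn (m.degree' (q' g * g))) ≤ δ :=
      Finset.sup_le hle
    rcases lt_or_eq_of_le hδ'le with hcase | hcase
    · exact ⟨q', hrep', hδdef ▸ hcase⟩
    · -- the top value is unchanged; the number of top summands dropped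
      have hg₁A : g₁ ∈ G.filter fun g => q g * g ≠ 0 ∧
          m.toSyn (m.degree' (q g * g)) = δ :=
        Finset.mem_filter.mpr ⟨hg₁G, hg₁ne, hg₁sup.symm⟩
      have hsubset : (G.filter fun g => q' g * g ≠ 0 ∧
            m.toSyn (m.degree' (q' g * g)) = G.sup fun g => m.toSyn (m.degree' (q' g * g))) ⊆
          (G.filter fun g => q g * g ≠ 0 ∧
            m.toSyn (m.degree' (q g * g)) = δ).erase g₁ := by
        intro g hgA'
        obtain ⟨hgG, hne', hdeg'⟩ := Finset.mem_filter.mp hgA'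
        have hdeg'δ : m.toSyn (m.degree' (q' g * g)) = δ := by rw [hdeg', hcase]
        have hgg₁ : g ≠ g₁ := by
          intro h
          rw [h] at hdeg'δ
          exact absurd hdeg'δ (ne_of_lt hg₁new)
        refine Finset.mem_erase.mpr ⟨hgg₁, Finset.mem_filter.mpr ⟨hgG, ?_⟩⟩
        by_contra hnotA
        have hqlt : m.toSyn (m.degree' (q g * g)) < δ := hbelow g hgG hnotA
        by_cases h2 : g = g₂
        · exact hnotA (h2 ▸ ⟨hg₂ne, hg₂sup⟩)
        · have hsplit : q' g * g =
              q g * g + (c • ((monomial (d - γ) (1 : k)) * s g)) * g := by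
            simp only [hq'def]
            rw [if_neg hgg₁, if_neg h2]
            ring
          have : m.toSyn (m.degree' (q' g * g)) < δ := by
            rw [hsplit]
            exact lt_of_le_of_lt (degree_add_le m _ _) (max_lt hqlt (hT g hgG))
          exact absurd hdeg'δ (ne_of_lt this)
      have hcard' : (G.filter fun g => q' g * g ≠ 0 ∧
          m.toSyn (m.degree' (q' g * g)) = G.sup fun g => m.toSyn (m.degree' (q' g * g))).card ≤ n := by
        have h1 := Finset.card_le_card hsubset
        rw [Finset.card_erase_of_mem hg₁A] at h1
        omega
      obtain ⟨q'', hrep'', hlt''⟩ := ih q' hrep' (by rw [hcase]; exact hlt) hcard'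
      exact ⟨q'', hrep'', lt_of_lt_of_le hlt'' (le_of_eq hcase)⟩

open Classical in
lemma head_mem (G : Finset (MvPolynomial σ k)) (hG0 : ∀ g ∈ G, g ≠ 0)
    (hS : ∀ g₁ ∈ G, ∀ g₂ ∈ G,
      ∃ q : MvPolynomial σ k → MvPolynomial σ k,
        (m.leadCoeff g₂ • (monomial ((m.degree' g₁ ⊔ m.degree' g₂) - m.degree' g₁) 1
            : MvPolynomial σ k) * g₁ -
          m.leadCoeff g₁ • (monomial ((m.degree' g₁ ⊔ m.degree' g₂) - m.degree' g₂) 1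
            : MvPolynomial σ k) * g₂) = ∑ g ∈ G, q g * g ∧
        ∀ g ∈ G, q g * g ≠ 0 →
          m.toSyn (m.degree' (q g * g)) < m.toSyn (m.degree' g₁ ⊔ m.degree' g₂))
    (p : MvPolynomial σ k) (hp : p ∈ Ideal.span (G : Set (MvPolynomial σ k))) :
    monomial (m.degree' p) (m.leadCoeff p) ∈
      Ideal.span {q : MvPolynomial σ k | ∃ g ∈ G, q = monomial (m.degree' g) (m.leadCoeff g)} := by
  obtain ⟨q₀, -, hq₀⟩ := Submodule.mem_span_finset.mp hp
  simp only [smul_eq_mul] at hq₀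
  set T : Set m.syn := {b | ∃ q : MvPolynomial σ k → MvPolynomial σ k,
    p = (∑ g ∈ G, q g * g) ∧ (G.sup fun g => m.toSyn (m.degree' (q g * g))) = b} with hT
  have hTne : T.Nonempty := ⟨_, q₀, hq₀.symm, rfl⟩
  obtain ⟨δ₀, ⟨q, hq, hδ₀⟩, hmin⟩ := m.wf.wf.has_min T hTne
  have hle : m.toSyn (m.degree' p) ≤ δ₀ := by
    rw [← hδ₀, hq]
    exact degree_sum_le m G fun g => q g * g
  have heq : m.toSyn (m.degree' p) = δ₀ := by
    rcases lt_or_eq_of_le hle with hlt | heq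
    · exfalso
      obtain ⟨q', hq', hlt'⟩ := descent m G hG0 hS p
        ((G.filter fun g => q g * g ≠ 0 ∧
          m.toSyn (m.degree' (q g * g)) = G.sup fun g => m.toSyn (m.degree' (q g * g))).card)
        q hq (hδ₀ ▸ hlt) le_rfl
      exact hmin _ ⟨q', hq', rfl⟩ (hδ₀ ▸ hlt')
    · exact heq
  have hmono : (monomial (m.degree' p) (m.leadCoeff p) : MvPolynomial σ k) =
      ∑ g ∈ G, monomial (m.degree' p) ((q g * g).coeff (m.degree' p)) := by
    rw [show m.leadCoeff p = p.coeff (m.degree' p) from rfl, hq, coeff_sum, map_sum]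
  rw [hmono]
  apply Ideal.sum_mem
  intro g hg
  by_cases h0 : (q g * g).coeff (m.degree' p) = 0
  · rw [h0, map_zero]
    exact Ideal.zero_mem _
  · have hqg0 : q g * g ≠ 0 := fun h => h0 (by rw [h, coeff_zero])
    have hq0 : q g ≠ 0 := left_ne_zero_of_mul hqg0
    have hg0 : g ≠ 0 := right_ne_zero_of_mul hqg0
    have h1 : m.toSyn (m.degree' (q g * g)) ≤ m.toSyn (m.degree' p) := by
      rw [heq, ← hδ₀]
      exact Finset.le_sup (f := fun g => m.toSyn (m.degree' (q g * g))) hg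
    have h2 : m.toSyn (m.degree' p) ≤ m.toSyn (m.degree' (q g * g)) :=
      le_degree m (by simpa [mem_support_iff] using h0)
    have hdeq : m.degree' (q g * g) = m.degree' p := m.toSyn.injective (le_antisymm h1 h2)
    have hcoeff : (q g * g).coeff (m.degree' p) = m.leadCoeff (q g) * m.leadCoeff g := by
      rw [← hdeq, ← MonomialOrder.leadCoeff, leadCoeff_mul m hq0 hg0]
    have hdsum : m.degree' p = m.degree' (q g) + m.degree' g := by
      rw [← hdeq, degree_mul m hq0 hg0]
    rw [hcoeff, hdsum, ← monomial_mul]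
    exact Ideal.mul_mem_left _ _ (Ideal.subset_span ⟨g, hg, rfl⟩)

end Buch


/-- Buchberger's criterion over a field: if every S-polynomial of a pair of elements of G
has a representation whose summands all have head term strictly below the lcm of the head
terms, then G is a Gröbner basis of the ideal it generates. -/
theorem buchberger_criterion {σ k : Type*} [Field k] [Finite σ]
    (m : MonomialOrder σ) (G : Finset (MvPolynomial σ k)) (hG0 : ∀ g ∈ G, g ≠ 0)
    (hS : ∀ g₁ ∈ G, ∀ g₂ ∈ G,
      ∃ q : MvPolynomial σ k → MvPolynomial σ k,
        (m.leadCoeff g₂ • (monomial ((m.degree' g₁ ⊔ m.degree' g₂) - m.degree' g₁) 1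
            : MvPolynomial σ k) * g₁ -
          m.leadCoeff g₁ • (monomial ((m.degree' g₁ ⊔ m.degree' g₂) - m.degree' g₂) 1
            : MvPolynomial σ k) * g₂) = ∑ g ∈ G, q g * g ∧
        ∀ g ∈ G, q g * g ≠ 0 →
          m.toSyn (m.degree' (q g * g)) < m.toSyn (m.degree' g₁ ⊔ m.degree' g₂)) :
    Ideal.span {q : MvPolynomial σ k | ∃ g ∈ G, q = monomial (m.degree' g) (m.leadCoeff g)} =
      Ideal.span {q : MvPolynomial σ k |
        ∃ p ∈ Ideal.span (G : Set (MvPolynomial σ k)), p ≠ 0 ∧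
          q = monomial (m.degree' p) (m.leadCoeff p)} := by
  apply le_antisymm
  · rw [Ideal.span_le]
    rintro x ⟨g, hgG, rfl⟩
    exact Ideal.subset_span ⟨g, Ideal.subset_span hgG, hG0 g hgG, rfl⟩
  · rw [Ideal.span_le]
    rintro x ⟨p, hp, hp0, rfl⟩
    exact Buch.head_mem m G hG0 hS p hp
end

section
/- Head monomial of a G-polynomial: let R be a commutative ring, σ a finite type, and m a monomial order on σ →₀ ℕ. Let p₁, …, p_j be nonzero polynomials in MvPolynomial σ R, let t : σ →₀ ℕ satisfy m.degree p_i ≤ t pointwise for all i, and let h₁, …, h_j ∈ R be such that g = Σ_i h_i · (m.leadCoeff p_i) ≠ 0. Then the G-polynomial q = Σ_i h_i • X^(t − m.degree p_i) * p_i satisfies m.degree q = t and m.leadCoeff q = g. -/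
open MvPolynomial

lemma le_degree_aux {σ R : Type*} [CommSemiring R] (m : MonomialOrder σ)
    {p : MvPolynomial σ R} {s : σ →₀ ℕ} (hs : s ∈ p.support) :
    m.toSyn s ≤ m.toSyn (m.degree' p) := by
  rw [MonomialOrder.degree', AddEquiv.apply_symm_apply]
  exact Finset.le_sup hs

/-- The head monomial of a G-polynomial: if g = Σ hᵢ·HC(pᵢ) is nonzero, then the
G-polynomial Σ hᵢ • X^(t - HT(pᵢ)) * pᵢ has head term t and head coefficient g. -/
theorem gPolynomial_head {σ R ι : Type*} [CommRing R] [Finite σ]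
    (m : MonomialOrder σ) (F : Finset ι) (p : ι → MvPolynomial σ R)
    (hp : ∀ i ∈ F, p i ≠ 0) (t : σ →₀ ℕ) (ht : ∀ i ∈ F, m.degree' (p i) ≤ t)
    (h : ι → R) (hg : ∑ i ∈ F, h i * m.leadCoeff' (p i) ≠ 0) :
    m.degree' (∑ i ∈ F, h i • (monomial (t - m.degree' (p i)) 1 : MvPolynomial σ R) * p i) = t ∧
      m.leadCoeff' (∑ i ∈ F, h i • (monomial (t - m.degree' (p i)) 1 : MvPolynomial σ R) * p i) =
        ∑ i ∈ F, h i * m.leadCoeff' (p i) := by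
  classical
  set q := ∑ i ∈ F, h i • (monomial (t - m.degree' (p i)) 1 : MvPolynomial σ R) * p i with hq
  have hcoeff : coeff t q = ∑ i ∈ F, h i * m.leadCoeff' (p i) := by
    rw [hq, coeff_sum]
    refine Finset.sum_congr rfl fun i hi => ?_
    rw [smul_mul_assoc, coeff_smul, coeff_monomial_mul', if_pos tsub_le_self, one_mul,
      tsub_tsub_cancel_of_le (ht i hi), smul_eq_mul]
    rfl
  have hsupp : ∀ s ∈ q.support, m.toSyn s ≤ m.toSyn t := by
    intro s hs
    obtain ⟨i, hi, hs⟩ := Finset.mem_biUnion.mp (MvPolynomial.support_sum hs)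
    rw [mem_support_iff, smul_mul_assoc, coeff_smul, coeff_monomial_mul'] at hs
    split_ifs at hs with hle
    · have hne : coeff (s - (t - m.degree' (p i))) (p i) ≠ 0 := by
        intro h0; rw [h0] at hs; simp at hs
      have h1 : m.toSyn (s - (t - m.degree' (p i))) ≤ m.toSyn (m.degree' (p i)) :=
        le_degree_aux m (mem_support_iff.mpr hne)
      have hseq : (t - m.degree' (p i)) + (s - (t - m.degree' (p i))) = s :=
        add_tsub_cancel_of_le hle
      calc m.toSyn s = m.toSyn (t - m.degree' (p i)) + m.toSyn (s - (t - m.degree' (p i))) := by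
            rw [← map_add, hseq]
        _ ≤ m.toSyn (t - m.degree' (p i)) + m.toSyn (m.degree' (p i)) := by
            exact add_le_add_right h1 _
        _ = m.toSyn t := by rw [← map_add, tsub_add_cancel_of_le (ht i hi)]
    · simp at hs
  have htmem : t ∈ q.support := mem_support_iff.mpr (hcoeff ▸ hg)
  have hdeg : m.degree' q = t := by
    have h1 : (q.support.sup fun s => m.toSyn s) = m.toSyn t :=
      le_antisymm (Finset.sup_le hsupp) (Finset.le_sup htmem)
    rw [MonomialOrder.degree', h1, AddEquiv.symm_apply_apply]
  exact ⟨hdeg, by rw [MonomialOrder.leadCoeff', hdeg, hcoeff]⟩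
end
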